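/- For an n-tuple of indeterminates T = (T_1,…,T_n) and m ≥ 0, define ℙ_m(T) = 𝕍(T)^{−1}·diag(T_1^m,…,T_n^m)·𝕍(T), where 𝕍(T) = (T_i^{j−1}) is the Vandermonde matrix; explicitly ℙ_m(T)_{ij} = Σ_{α=1}^n (−1)^{n−i} e_{n−i}(T̂_α) T_α^{m+j−1} / Π_{l≠α}(T_α − T_l). Then: (1) every entry ℙ_m(T)_{ij} is a symmetric polynomial in T_1,…,T_n (no denominators); (2) ℙ_m satisfies the homogeneity ℙ_m(tT)_{ij} = t^{m+j−i}·ℙ_m(T)_{ij} for all scalars t ≠ 0. -/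

import Mathlib

open scoped BigOperators
open Polynomial

variable {F : Type*} [Field F]

lemma coeff_prod_X_sub_C' {ι : Type*} [DecidableEq ι] (s : Finset ι) (x : ι → F) {i : ℕ}
    (h : i ≤ s.card) :
    (∏ l ∈ s, (X - C (x l))).coeff i
      = (-1 : F) ^ (s.card - i) * ∑ t ∈ s.powersetCard (s.card - i), ∏ l ∈ t, x l := by
  have h1 : (∏ l ∈ s, (X - C (x l))) = ((s.val.map x).map fun t => X - C t).prod := by
    rw [Multiset.map_map]; rfl
  rw [h1, Multiset.prod_X_sub_C_coeff _ (by simpa using h)]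
  simp [Finset.esymm_map_val]

lemma remainder_eq {n : ℕ} (x : Fin n → F) (hx : Function.Injective x) (k : ℕ) :
    (X ^ k) %ₘ (∏ l : Fin n, (X - C (x l)))
      = ∑ α : Fin n, C ((∏ l ∈ Finset.univ.erase α, (x α - x l))⁻¹ * x α ^ k) *
          ∏ l ∈ Finset.univ.erase α, (X - C (x l)) := by
  classical
  set f : F[X] := ∏ l : Fin n, (X - C (x l)) with hf
  have hfm : f.Monic := monic_prod_of_monic _ _ fun l _ => monic_X_sub_C _
  have hdegf : f.degree = (n : ℕ) := by
    rw [hf, degree_prod]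
    simp [degree_X_sub_C]
  have hD : ∀ α : Fin n, (∏ l ∈ Finset.univ.erase α, (x α - x l)) ≠ 0 := by
    intro α
    rw [Finset.prod_ne_zero_iff]
    intro l hl
    exact sub_ne_zero.mpr fun h => (Finset.mem_erase.mp hl).1 (hx h.symm)
  refine Polynomial.eq_of_degrees_lt_of_eval_index_eq (v := x) Finset.univ
    (Set.injOn_of_injective hx) ?_ ?_ ?_
  · rw [Finset.card_univ, Fintype.card_fin, ← hdegf]
    exact degree_modByMonic_lt _ hfm
  · rw [Finset.card_univ, Fintype.card_fin]
    refine lt_of_le_of_lt (degree_sum_le _ _) ?_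
    rw [Finset.sup_lt_iff (by exact_mod_cast WithBot.bot_lt_coe n)]
    intro α _
    refine lt_of_le_of_lt (degree_mul_le _ _) ?_
    have h1 : (C ((∏ l ∈ Finset.univ.erase α, (x α - x l))⁻¹ * x α ^ k)).degree ≤ 0 :=
      degree_C_le
    have h2 : (∏ l ∈ Finset.univ.erase α, (X - C (x l))).degree = ((n - 1 : ℕ) : WithBot ℕ) := by
      rw [degree_prod]
      simp [degree_X_sub_C, Finset.card_erase_of_mem, Finset.card_univ]
    have : α.1 < n := α.2
    calc _ ≤ 0 + ((n-1 : ℕ) : WithBot ℕ) := add_le_add h1 h2.le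
    _ < (n : WithBot ℕ) := by
        rw [zero_add]
        exact_mod_cast Nat.sub_lt (by omega) one_pos
  · intro β _
    have hfe : f.eval (x β) = 0 := by
      rw [hf, eval_prod]
      exact Finset.prod_eq_zero (Finset.mem_univ β) (by simp)
    rw [modByMonic_eq_sub_mul_div _ f]
    simp only [eval_sub, eval_mul, hfe, zero_mul, sub_zero, eval_pow, eval_X]
    rw [eval_finset_sum]
    rw [Finset.sum_eq_single β]
    · simp only [eval_mul, eval_C, eval_prod, eval_sub, eval_X]
      rw [mul_assoc, mul_comm (x β ^ k), inv_mul_cancel_left₀ (hD β)]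
    · intro α _ hαβ
      rw [eval_mul]
      apply mul_eq_zero_of_right
      rw [eval_prod]
      refine Finset.prod_eq_zero (Finset.mem_erase.mpr ⟨hαβ.symm, Finset.mem_univ β⟩) (by simp)
    · intro h; exact absurd (Finset.mem_univ β) h

noncomputable def Pment (n m : ℕ) (x : Fin n → ℂ) (i j : Fin n) : ℂ :=
  ∑ α : Fin n, (-1 : ℂ) ^ (n - 1 - (i : ℕ)) *
    (∑ s ∈ Finset.powersetCard (n - 1 - (i : ℕ)) (Finset.univ.erase α), ∏ l ∈ s, x l) *
    x α ^ (m + (j : ℕ)) / ∏ l ∈ Finset.univ.erase α, (x α - x l)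


lemma Pment_eq_coeff {n m : ℕ} (x : Fin n → ℂ) (hx : Function.Injective x) (i j : Fin n) :
    Pment n m x i j
      = ((X ^ (m + (j : ℕ))) %ₘ (∏ l : Fin n, (X - C (x l)))).coeff i := by
  rw [remainder_eq x hx, Polynomial.finset_sum_coeff, Pment]
  refine Finset.sum_congr rfl fun α _ => ?_
  have hcard : (Finset.univ.erase α).card = n - 1 := by
    rw [Finset.card_erase_of_mem (Finset.mem_univ α), Finset.card_univ, Fintype.card_fin]
  have hi : (i : ℕ) ≤ (Finset.univ.erase α).card := by
    rw [hcard]; omega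
  rw [Polynomial.coeff_C_mul, coeff_prod_X_sub_C' _ _ hi, hcard]
  rw [div_eq_mul_inv]
  ring

noncomputable def Ppoly (n m : ℕ) (i j : Fin n) : MvPolynomial (Fin n) ℂ :=
  ((X ^ (m + (j : ℕ))) %ₘ
    (∏ l : Fin n, (X - C (MvPolynomial.X l : MvPolynomial (Fin n) ℂ)))).coeff i

lemma Fmonic (n m : ℕ) :
    (∏ l : Fin n, (X - C (MvPolynomial.X l : MvPolynomial (Fin n) ℂ))).Monic :=
  monic_prod_of_monic _ _ fun l _ => monic_X_sub_C _

lemma Ppoly_symm (n m : ℕ) (i j : Fin n) : (Ppoly n m i j).IsSymmetric := by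
  intro σ
  have key : Polynomial.map ((MvPolynomial.rename σ).toRingHom :
        MvPolynomial (Fin n) ℂ →+* MvPolynomial (Fin n) ℂ)
      ((X ^ (m + (j : ℕ))) %ₘ (∏ l : Fin n, (X - C (MvPolynomial.X l))))
      = (X ^ (m + (j : ℕ))) %ₘ (∏ l : Fin n, (X - C (MvPolynomial.X l))) := by
    rw [Polynomial.map_modByMonic _ (Fmonic n m)]
    congr 1
    · simp
    · rw [Polynomial.map_prod]
      simp only [Polynomial.map_sub, Polynomial.map_X, Polynomial.map_C,
        AlgHom.toRingHom_eq_coe, RingHom.coe_coe, MvPolynomial.rename_X]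
      exact Fintype.prod_equiv σ _ _ fun l => rfl
  have := congrArg (fun p => Polynomial.coeff p i) key
  simpa [Polynomial.coeff_map, Ppoly] using this

lemma Ppoly_eval (n m : ℕ) (x : Fin n → ℂ) (i j : Fin n) :
    MvPolynomial.eval x (Ppoly n m i j)
      = ((X ^ (m + (j : ℕ))) %ₘ (∏ l : Fin n, (X - C (x l)))).coeff i := by
  have key : Polynomial.map (MvPolynomial.eval x : MvPolynomial (Fin n) ℂ →+* ℂ)
      ((X ^ (m + (j : ℕ))) %ₘ (∏ l : Fin n, (X - C (MvPolynomial.X l))))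
      = (X ^ (m + (j : ℕ))) %ₘ (∏ l : Fin n, (X - C (x l))) := by
    rw [Polynomial.map_modByMonic _ (Fmonic n m)]
    congr 1
    · simp
    · rw [Polynomial.map_prod]
      simp
  have := congrArg (fun p => Polynomial.coeff p i) key
  simpa [Polynomial.coeff_map, Ppoly] using this

lemma Pment_homog (n m : ℕ) (x : Fin n → ℂ) (hx : Function.Injective x)
    (t : ℂ) (ht : t ≠ 0) (i j : Fin n) :
    Pment n m (fun l => t * x l) i j
      = t ^ (((m : ℤ) + ((j : ℕ) : ℤ)) - ((i : ℕ) : ℤ)) * Pment n m x i j := by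
  set e : ℕ := n - 1 - (i : ℕ) with he
  have hin : (i : ℕ) ≤ n - 1 := by omega
  have hz : t ^ (((m : ℤ) + ((j : ℕ) : ℤ)) - ((i : ℕ) : ℤ))
      = t ^ e * t ^ (m + (j : ℕ)) * (t ^ (n - 1))⁻¹ := by
    have : (((m : ℤ) + ((j : ℕ) : ℤ)) - ((i : ℕ) : ℤ))
        = ((e : ℤ) + ((m + (j : ℕ) : ℕ) : ℤ)) - ((n - 1 : ℕ) : ℤ) := by
      omega
    rw [this, zpow_sub₀ ht, zpow_add₀ ht, zpow_natCast, zpow_natCast, zpow_natCast,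
      div_eq_mul_inv]
  rw [Pment, Pment, hz, Finset.mul_sum]
  refine Finset.sum_congr rfl fun α _ => ?_
  have hS : (∑ s ∈ Finset.powersetCard e (Finset.univ.erase α), ∏ l ∈ s, (t * x l))
      = t ^ e * ∑ s ∈ Finset.powersetCard e (Finset.univ.erase α), ∏ l ∈ s, x l := by
    rw [Finset.mul_sum]
    refine Finset.sum_congr rfl fun s hs => ?_
    rw [Finset.prod_mul_distrib, Finset.prod_const,
      (Finset.mem_powersetCard.mp hs).2]
  have hDt : (∏ l ∈ Finset.univ.erase α, (t * x α - t * x l))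
      = t ^ (n - 1) * ∏ l ∈ Finset.univ.erase α, (x α - x l) := by
    have h1 : ∀ l ∈ Finset.univ.erase α, t * x α - t * x l = t * (x α - x l) :=
      fun l _ => by ring
    rw [Finset.prod_congr rfl h1, Finset.prod_mul_distrib, Finset.prod_const,
      Finset.card_erase_of_mem (Finset.mem_univ α), Finset.card_univ, Fintype.card_fin]
  have hD : (∏ l ∈ Finset.univ.erase α, (x α - x l)) ≠ 0 := by
    rw [Finset.prod_ne_zero_iff]
    intro l hl
    exact sub_ne_zero.mpr fun h => (Finset.mem_erase.mp hl).1 (hx h.symm)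
  rw [hS, hDt, mul_pow]
  field_simp
  ring

theorem stmt17 (n : ℕ) (hn : 1 ≤ n) (m : ℕ) :
    ∃ P : Fin n → Fin n → MvPolynomial (Fin n) ℂ,
      (∀ i j, (P i j).IsSymmetric) ∧
      (∀ x : Fin n → ℂ, Function.Injective x → ∀ i j : Fin n,
        MvPolynomial.eval x (P i j) = Pment n m x i j) ∧
      (∀ x : Fin n → ℂ, Function.Injective x → ∀ t : ℂ, t ≠ 0 → ∀ i j : Fin n,
        Pment n m (fun l => t * x l) i j
          = t ^ (((m : ℤ) + ((j : ℕ) : ℤ)) - ((i : ℕ) : ℤ)) * Pment n m x i j) := by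
  refine ⟨fun i j => Ppoly n m i j, fun i j => Ppoly_symm n m i j, ?_, ?_⟩
  · intro x hx i j
    rw [Ppoly_eval, ← Pment_eq_coeff x hx]
  · intro x hx t ht i j
    exact Pment_homog n m x hx t ht i j
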